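/- Let G be a uniquely C4+-saturated graph on n vertices with exactly k triangles, k >= 2, and let A be the set of all vertices in triangles of G. Let t = min over u in N(A) of (k - |N(u) ∩ A|). Then n <= k²/2 + (10t+5)k/2 + (25t² + 7t)/2 + 1. -/

import Mathlib

open SimpleGraph

/-- The diamond graph `C₄⁺`: a `4`-cycle with one chord, i.e. `K₄` minus an edge. -/
def diamond : SimpleGraph (Fin 4) := (⊤ : SimpleGraph (Fin 4)).deleteEdges {s(0, 1)}

/-- `G'` is a copy of `H` in `G`, i.e. a subgraph of `G` isomorphic to `H`. -/
def IsCopy {W V : Type*} (H : SimpleGraph W) {G : SimpleGraph V} (G' : G.Subgraph) : Prop :=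
  Nonempty (G'.coe ≃g H)

/-- `G` is uniquely `H`-saturated: `G` is `H`-free, and adding any non-edge
creates exactly one copy of `H`. -/
def UniquelySaturated {W V : Type*} (H : SimpleGraph W) (G : SimpleGraph V) : Prop :=
  (∀ G' : G.Subgraph, ¬ IsCopy H G') ∧
    ∀ u v : V, u ≠ v → ¬ G.Adj u v →
      ∃! G' : (G ⊔ SimpleGraph.fromEdgeSet {s(u, v)}).Subgraph, IsCopy H G'

/-- The set of vertices belonging to some triangle of `G`. -/
def triangleVerts {V : Type*} (G : SimpleGraph V) : Set V :=
  {v | ∃ a b, G.Adj v a ∧ G.Adj v b ∧ G.Adj a b}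

section Copy
variable {V : Type*}

def dSub (H : SimpleGraph V) (a b c d : V) : H.Subgraph where
  verts := {a, b, c, d}
  Adj x y := H.Adj x y ∧
    (s(x,y) = s(a,b) ∨ s(x,y) = s(a,c) ∨ s(x,y) = s(a,d) ∨ s(x,y) = s(b,c) ∨ s(x,y) = s(b,d))
  adj_sub h := h.1
  edge_vert := by
    rintro x y ⟨hxy, h | h | h | h | h⟩ <;>
      rw [Sym2.eq_iff] at h <;>
      rcases h with ⟨rfl, rfl⟩ | ⟨rfl, rfl⟩ <;> simp
  symm := by
    constructor
    rintro x y ⟨hxy, h⟩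
    exact ⟨hxy.symm, by rwa [Sym2.eq_swap] at h⟩

lemma dSub_verts (H : SimpleGraph V) (a b c d : V) :
    (dSub H a b c d).verts = {a, b, c, d} := rfl

lemma diamond_adj_iff (i j : Fin 4) :
    diamond.Adj i j ↔ i ≠ j ∧ ¬ s(i,j) = s((0:Fin 4),(1:Fin 4)) := by
  simp [diamond, deleteEdges_adj, top_adj]

lemma isCopy_dSub (H : SimpleGraph V) (a b c d : V)
    (hab : H.Adj a b) (hac : H.Adj a c) (had : H.Adj a d)
    (hbc : H.Adj b c) (hbd : H.Adj b d) (hcd : c ≠ d) :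
    IsCopy diamond (dSub H a b c d) := by
  letI : DecidableEq V := Classical.decEq V
  have hab' : a ≠ b := hab.ne
  have hac' : a ≠ c := hac.ne
  have had' : a ≠ d := had.ne
  have hbc' : b ≠ c := hbc.ne
  have hbd' : b ≠ d := hbd.ne
  have ma : a ∈ ({a,b,c,d} : Set V) := by left; rfl
  have mb : b ∈ ({a,b,c,d} : Set V) := by right; left; rfl
  have mc : c ∈ ({a,b,c,d} : Set V) := by right; right; left; rfl
  have md : d ∈ ({a,b,c,d} : Set V) := by right; right; right; rfl
  set D := dSub H a b c d with hD
  have hvmem : ∀ x : V, x ∈ D.verts ↔ x = a ∨ x = b ∨ x = c ∨ x = d := by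
    intro x
    show x ∈ ({a,b,c,d} : Set V) ↔ _
    simp [Set.mem_insert_iff]
  have Dab : D.Adj a b := ⟨hab, Or.inl rfl⟩
  have Dac : D.Adj a c := ⟨hac, Or.inr (Or.inl rfl)⟩
  have Dad : D.Adj a d := ⟨had, Or.inr (Or.inr (Or.inl rfl))⟩
  have Dbc : D.Adj b c := ⟨hbc, Or.inr (Or.inr (Or.inr (Or.inl rfl)))⟩
  have Dbd : D.Adj b d := ⟨hbd, Or.inr (Or.inr (Or.inr (Or.inr rfl)))⟩
  have ncd : ¬ D.Adj c d := by
    rintro ⟨h, h5⟩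
    rcases h5 with h'|h'|h'|h'|h' <;> rw [Sym2.eq_iff] at h' <;>
      rcases h' with ⟨h1, h2⟩ | ⟨h1, h2⟩ <;> simp_all
  have ndc : ¬ D.Adj d c := fun h => ncd h.symm
  have ndiag : ∀ x, ¬ D.Adj x x := fun x h => (D.adj_sub h).ne rfl
  let f : Fin 4 → D.verts := fun i =>
    match i with
    | ⟨0, _⟩ => ⟨c, mc⟩
    | ⟨1, _⟩ => ⟨d, md⟩
    | ⟨2, _⟩ => ⟨a, ma⟩
    | ⟨3, _⟩ => ⟨b, mb⟩
  let g : D.verts → Fin 4 := fun x =>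
    if x.1 = a then 2 else if x.1 = b then 3 else if x.1 = c then 0 else 1
  have hgf : ∀ i, g (f i) = i := by
    intro i
    fin_cases i
    · show (if c = a then (2:Fin 4) else if c = b then 3 else if c = c then 0 else 1) = _
      rw [if_neg (Ne.symm hac'), if_neg (Ne.symm hbc'), if_pos rfl]; rfl
    · show (if d = a then (2:Fin 4) else if d = b then 3 else if d = c then 0 else 1) = _
      rw [if_neg (Ne.symm had'), if_neg (Ne.symm hbd'), if_neg (Ne.symm hcd)]; rfl
    · show (if a = a then (2:Fin 4) else _) = _
      rw [if_pos rfl]; rfl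
    · show (if b = a then (2:Fin 4) else if b = b then 3 else _) = _
      rw [if_neg (Ne.symm hab'), if_pos rfl]; rfl
  have hfg : ∀ x, f (g x) = x := by
    rintro ⟨x, hx⟩
    rcases (hvmem x).1 hx with rfl | rfl | rfl | rfl
    · show f (if x = x then 2 else _) = _
      rw [if_pos rfl]
    · show f (if x = a then 2 else if x = x then 3 else _) = _
      rw [if_neg hab'.symm, if_pos rfl]
    · show f (if x = a then 2 else if x = b then 3 else if x = x then 0 else 1) = _
      rw [if_neg hac'.symm, if_neg hbc'.symm, if_pos rfl]
    · show f (if x = a then 2 else if x = b then 3 else if x = c then 0 else 1) = _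
      rw [if_neg had'.symm, if_neg hbd'.symm, if_neg hcd.symm]
  have dtrue : ∀ i j : Fin 4, i ≠ j → ¬ s(i,j) = s((0:Fin 4),(1:Fin 4)) → diamond.Adj i j :=
    fun i j h1 h2 => (diamond_adj_iff i j).2 ⟨h1, h2⟩
  have key : ∀ i j : Fin 4, D.coe.Adj (f i) (f j) ↔ diamond.Adj i j := by
    intro i j
    have dfalse : ∀ i j : Fin 4, (i = j ∨ s(i,j) = s((0:Fin 4),(1:Fin 4))) → ¬ diamond.Adj i j := by
      intro i j h hadj
      rw [diamond_adj_iff] at hadj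
      rcases h with h | h
      · exact hadj.1 h
      · exact hadj.2 h
    fin_cases i <;> fin_cases j <;>
      first
      | exact iff_of_false (ndiag _) (dfalse _ _ (Or.inl rfl))
      | exact iff_of_false ncd (dfalse _ _ (Or.inr rfl))
      | exact iff_of_false ndc (dfalse _ _ (Or.inr (Sym2.eq_swap)))
      | exact iff_of_true Dab (dtrue _ _ (by decide) (by rw [Sym2.eq_iff]; decide))
      | exact iff_of_true Dac (dtrue _ _ (by decide) (by rw [Sym2.eq_iff]; decide))
      | exact iff_of_true Dad (dtrue _ _ (by decide) (by rw [Sym2.eq_iff]; decide))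
      | exact iff_of_true Dbc (dtrue _ _ (by decide) (by rw [Sym2.eq_iff]; decide))
      | exact iff_of_true Dbd (dtrue _ _ (by decide) (by rw [Sym2.eq_iff]; decide))
      | exact iff_of_true Dab.symm (dtrue _ _ (by decide) (by rw [Sym2.eq_iff]; decide))
      | exact iff_of_true Dac.symm (dtrue _ _ (by decide) (by rw [Sym2.eq_iff]; decide))
      | exact iff_of_true Dad.symm (dtrue _ _ (by decide) (by rw [Sym2.eq_iff]; decide))
      | exact iff_of_true Dbc.symm (dtrue _ _ (by decide) (by rw [Sym2.eq_iff]; decide))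
      | exact iff_of_true Dbd.symm (dtrue _ _ (by decide) (by rw [Sym2.eq_iff]; decide))
  exact ⟨(⟨⟨f, g, hgf, hfg⟩, fun {i j} => key i j⟩ : diamond ≃g D.coe).symm⟩

end Copy

lemma extract_copy {V : Type*} {H : SimpleGraph V} {C : H.Subgraph}
    (h : IsCopy diamond C) :
    ∃ a b c d : V, H.Adj a b ∧ H.Adj a c ∧ H.Adj a d ∧ H.Adj b c ∧ H.Adj b d ∧ c ≠ d := by
  obtain ⟨e⟩ := h
  have adj : ∀ i j : Fin 4, diamond.Adj i j → H.Adj (e.symm i).1 (e.symm j).1 := by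
    intro i j hij
    have : C.coe.Adj (e.symm i) (e.symm j) := by
      rw [← e.map_rel_iff, e.apply_symm_apply, e.apply_symm_apply]
      exact hij
    exact C.adj_sub this
  have hne : ((e.symm 0 : C.verts) : V) ≠ ((e.symm 1 : C.verts) : V) := by
    intro hval
    have : (e.symm 0 : C.verts) = e.symm 1 := Subtype.ext hval
    have := e.symm.injective.ne (show (0 : Fin 4) ≠ 1 by decide)
    exact this ‹_›
  refine ⟨(e.symm 2).1, (e.symm 3).1, (e.symm 0).1, (e.symm 1).1, ?_, ?_, ?_, ?_, ?_, hne⟩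
  · exact adj 2 3 ((diamond_adj_iff 2 3).2 ⟨by decide, by rw [Sym2.eq_iff]; decide⟩)
  · exact adj 2 0 ((diamond_adj_iff 2 0).2 ⟨by decide, by rw [Sym2.eq_iff]; decide⟩)
  · exact adj 2 1 ((diamond_adj_iff 2 1).2 ⟨by decide, by rw [Sym2.eq_iff]; decide⟩)
  · exact adj 3 0 ((diamond_adj_iff 3 0).2 ⟨by decide, by rw [Sym2.eq_iff]; decide⟩)
  · exact adj 3 1 ((diamond_adj_iff 3 1).2 ⟨by decide, by rw [Sym2.eq_iff]; decide⟩)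

section Sat

variable {V : Type*} {G : SimpleGraph V}

/-- diamond-freeness, concrete form -/
lemma free' (hsat : UniquelySaturated diamond G) :
    ∀ a b c d : V, G.Adj a b → G.Adj a c → G.Adj a d → G.Adj b c → G.Adj b d → c ≠ d → False :=
  fun a b c d hab hac had hbc hbd hcd =>
    hsat.1 (dSub G a b c d) (isCopy_dSub G a b c d hab hac had hbc hbd hcd)

lemma sup_adj_iff {u z x y : V} :
    (G ⊔ SimpleGraph.fromEdgeSet {s(u, z)}).Adj x y ↔ G.Adj x y ∨ (s(x,y) = s(u,z) ∧ x ≠ y) := by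
  rw [sup_adj, fromEdgeSet_adj, Set.mem_singleton_iff]

lemma lift_adj {u z x y : V} (h : G.Adj x y) :
    (G ⊔ SimpleGraph.fromEdgeSet {s(u, z)}).Adj x y := sup_adj_iff.2 (Or.inl h)

lemma new_adj {u z : V} (hne : u ≠ z) :
    (G ⊔ SimpleGraph.fromEdgeSet {s(u, z)}).Adj u z := sup_adj_iff.2 (Or.inr ⟨rfl, hne⟩)

lemma new_adj' {u z x y : V} (hne : x ≠ y) (h : s(x,y) = s(u,z)) :
    (G ⊔ SimpleGraph.fromEdgeSet {s(u, z)}).Adj x y := sup_adj_iff.2 (Or.inr ⟨h, hne⟩)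

/-- classification of what adding a non-edge must create -/
lemma classify (hsat : UniquelySaturated diamond G) {u z : V}
    (hne : u ≠ z) (hnadj : ¬ G.Adj u z) :
    (∃ p q, p ≠ q ∧ G.Adj u p ∧ G.Adj u q ∧ G.Adj z p ∧ G.Adj z q) ∨
    (∃ s m, G.Adj u s ∧ G.Adj z s ∧ G.Adj u m ∧ G.Adj s m ∧ m ≠ z) ∨
    (∃ s m, G.Adj z s ∧ G.Adj u s ∧ G.Adj z m ∧ G.Adj s m ∧ m ≠ u) := by
  obtain ⟨C, hC, -⟩ := hsat.2 u z hne hnadj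
  obtain ⟨a, b, c, d, hab, hac, had, hbc, hbd, hcd⟩ := extract_copy hC
  have gadj : ∀ {x y : V}, (G ⊔ SimpleGraph.fromEdgeSet {s(u, z)}).Adj x y →
      ¬ s(x,y) = s(u,z) → G.Adj x y := by
    intro x y h h'
    rcases sup_adj_iff.1 h with h | ⟨h1, -⟩
    · exact h
    · exact absurd h1 h'
  have hab' : a ≠ b := hab.ne
  have hac' : a ≠ c := hac.ne
  have had' : a ≠ d := had.ne
  have hbc' : b ≠ c := hbc.ne
  have hbd' : b ≠ d := hbd.ne
  by_cases e1 : s(a,b) = s(u,z)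
  · have gac : G.Adj a c := gadj hac (by
      intro h; have h2 := h.trans e1.symm; rw [Sym2.eq_iff] at h2
      rcases h2 with ⟨h3,h4⟩|⟨h3,h4⟩ <;> simp_all)
    have gad : G.Adj a d := gadj had (by
      intro h; have h2 := h.trans e1.symm; rw [Sym2.eq_iff] at h2
      rcases h2 with ⟨h3,h4⟩|⟨h3,h4⟩ <;> simp_all)
    have gbc : G.Adj b c := gadj hbc (by
      intro h; have h2 := h.trans e1.symm; rw [Sym2.eq_iff] at h2
      rcases h2 with ⟨h3,h4⟩|⟨h3,h4⟩ <;> simp_all)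
    have gbd : G.Adj b d := gadj hbd (by
      intro h; have h2 := h.trans e1.symm; rw [Sym2.eq_iff] at h2
      rcases h2 with ⟨h3,h4⟩|⟨h3,h4⟩ <;> simp_all)
    rw [Sym2.eq_iff] at e1
    rcases e1 with ⟨rfl, rfl⟩ | ⟨rfl, rfl⟩
    · exact Or.inl ⟨c, d, hcd, gac, gad, gbc, gbd⟩
    · exact Or.inl ⟨c, d, hcd, gbc, gbd, gac, gad⟩
  · by_cases e2 : s(a,c) = s(u,z)
    · have gab : G.Adj a b := gadj hab e1
      have gad : G.Adj a d := gadj had (by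
        intro h; have h2 := h.trans e2.symm; rw [Sym2.eq_iff] at h2
        rcases h2 with ⟨h3,h4⟩|⟨h3,h4⟩ <;> simp_all)
      have gbc : G.Adj b c := gadj hbc (by
        intro h; have h2 := h.trans e2.symm; rw [Sym2.eq_iff] at h2
        rcases h2 with ⟨h3,h4⟩|⟨h3,h4⟩ <;> simp_all)
      have gbd : G.Adj b d := gadj hbd (by
        intro h; have h2 := h.trans e2.symm; rw [Sym2.eq_iff] at h2
        rcases h2 with ⟨h3,h4⟩|⟨h3,h4⟩ <;> simp_all)
      rw [Sym2.eq_iff] at e2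
      rcases e2 with ⟨rfl, rfl⟩ | ⟨rfl, rfl⟩
      · exact Or.inr (Or.inl ⟨b, d, gab, gbc.symm, gad, gbd, fun h => hcd h.symm⟩)
      · exact Or.inr (Or.inr ⟨b, d, gab, gbc.symm, gad, gbd, fun h => hcd h.symm⟩)
    · by_cases e3 : s(a,d) = s(u,z)
      · have gab : G.Adj a b := gadj hab e1
        have gac : G.Adj a c := gadj hac e2
        have gbc : G.Adj b c := gadj hbc (by
          intro h; have h2 := h.trans e3.symm; rw [Sym2.eq_iff] at h2
          rcases h2 with ⟨h3,h4⟩|⟨h3,h4⟩ <;> simp_all)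
        have gbd : G.Adj b d := gadj hbd (by
          intro h; have h2 := h.trans e3.symm; rw [Sym2.eq_iff] at h2
          rcases h2 with ⟨h3,h4⟩|⟨h3,h4⟩ <;> simp_all)
        rw [Sym2.eq_iff] at e3
        rcases e3 with ⟨rfl, rfl⟩ | ⟨rfl, rfl⟩
        · exact Or.inr (Or.inl ⟨b, c, gab, gbd.symm, gac, gbc, hcd⟩)
        · exact Or.inr (Or.inr ⟨b, c, gab, gbd.symm, gac, gbc, hcd⟩)
      · by_cases e4 : s(b,c) = s(u,z)
        · have gab : G.Adj a b := gadj hab e1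
          have gac : G.Adj a c := gadj hac e2
          have gad : G.Adj a d := gadj had e3
          have gbd : G.Adj b d := gadj hbd (by
            intro h; have h2 := h.trans e4.symm; rw [Sym2.eq_iff] at h2
            rcases h2 with ⟨h3,h4⟩|⟨h3,h4⟩ <;> simp_all)
          rw [Sym2.eq_iff] at e4
          rcases e4 with ⟨rfl, rfl⟩ | ⟨rfl, rfl⟩
          · exact Or.inr (Or.inl ⟨a, d, gab.symm, gac.symm, gbd, gad, fun h => hcd h.symm⟩)
          · exact Or.inr (Or.inr ⟨a, d, gab.symm, gac.symm, gbd, gad, fun h => hcd h.symm⟩)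
        · by_cases e5 : s(b,d) = s(u,z)
          · have gab : G.Adj a b := gadj hab e1
            have gac : G.Adj a c := gadj hac e2
            have gad : G.Adj a d := gadj had e3
            have gbc : G.Adj b c := gadj hbc e4
            rw [Sym2.eq_iff] at e5
            rcases e5 with ⟨rfl, rfl⟩ | ⟨rfl, rfl⟩
            · exact Or.inr (Or.inl ⟨a, c, gab.symm, gad.symm, gbc, gac, hcd⟩)
            · exact Or.inr (Or.inr ⟨a, c, gab.symm, gad.symm, gbc, gac, hcd⟩)
          · exact absurd (free' hsat a b c d (gadj hab e1) (gadj hac e2) (gadj had e3)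
              (gadj hbc e4) (gadj hbd e5) hcd) (fun h => h)

/-- no nonadjacent pair has three common neighbours -/
lemma three_common (hsat : UniquelySaturated diamond G) {u z p q r : V}
    (hne : u ≠ z) (hnadj : ¬ G.Adj u z)
    (hup : G.Adj u p) (hzp : G.Adj z p) (huq : G.Adj u q) (hzq : G.Adj z q)
    (hur : G.Adj u r) (hzr : G.Adj z r) (hpq : p ≠ q) (hpr : p ≠ r) (hqr : q ≠ r) : False := by
  obtain ⟨C, -, hU⟩ := hsat.2 u z hne hnadj
  have h1 := isCopy_dSub _ u z p q (new_adj hne) (lift_adj hup) (lift_adj huq)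
    (lift_adj hzp) (lift_adj hzq) hpq
  have h2 := isCopy_dSub _ u z p r (new_adj hne) (lift_adj hup) (lift_adj hur)
    (lift_adj hzp) (lift_adj hzr) hpr
  have heq := (hU _ h1).trans (hU _ h2).symm
  have hv := congrArg SimpleGraph.Subgraph.verts heq
  rw [dSub_verts, dSub_verts] at hv
  have hqmem : q ∈ ({u,z,p,r} : Set V) := by
    rw [← hv]; right; right; right; rfl
  rcases hqmem with h | h | h | h
  · exact huq.ne' h
  · exact hzq.ne' h
  · exact hpq h.symm
  · exact hqr h

/-- a vertex of a triangle which is not the one adjacent to u has no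
other neighbours among N(u): `b`'s only neighbour in N(u) is `a`. -/
lemma only_nbr (hsat : UniquelySaturated diamond G) {a b c u p : V}
    (hab : G.Adj a b) (hac : G.Adj a c) (hbc : G.Adj b c)
    (hua : G.Adj u a) (hup : G.Adj u p) (hpb : G.Adj p b) (hpa : p ≠ a)
    (hub : ¬ G.Adj u b) (hub' : u ≠ b) (huc : ¬ G.Adj u c) (huc' : u ≠ c) : False := by
  obtain ⟨C, -, hU⟩ := hsat.2 u b hub' hub
  -- side copy {b,a,u,c} : deg-3 pair (b,a), nonadjacent pair (u,c)
  have h1 := isCopy_dSub (G ⊔ SimpleGraph.fromEdgeSet {s(u, b)}) b a u c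
    (lift_adj hab.symm) (new_adj' (Ne.symm hub') Sym2.eq_swap) (lift_adj hbc)
    (lift_adj hua.symm) (lift_adj hac) huc'
  -- chord copy {u,b,a,p}
  have h2 := isCopy_dSub (G ⊔ SimpleGraph.fromEdgeSet {s(u, b)}) u b a p
    (new_adj hub') (lift_adj hua) (lift_adj hup)
    (lift_adj hab.symm) (lift_adj hpb.symm) (fun h => hpa h.symm)
  have heq := (hU _ h1).trans (hU _ h2).symm
  have hv := congrArg SimpleGraph.Subgraph.verts heq
  rw [dSub_verts, dSub_verts] at hv
  have hcmem : c ∈ ({u,b,a,p} : Set V) := by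
    rw [← hv]; right; right; right; rfl
  rcases hcmem with h | h | h | h
  · exact huc' h.symm
  · exact hbc.ne' h
  · exact hac.ne' h
  · exact huc (h ▸ hup)

/-- any two triangles sharing a vertex coincide -/
lemma unique_triangle (hsat : UniquelySaturated diamond G) {v a b x y : V}
    (hva : G.Adj v a) (hvb : G.Adj v b) (hab : G.Adj a b)
    (hvx : G.Adj v x) (hvy : G.Adj v y) (hxy : G.Adj x y) :
    (x = a ∧ y = b) ∨ (x = b ∧ y = a) := by
  by_cases hxa : x = a
  · subst hxa
    left
    refine ⟨rfl, ?_⟩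
    by_contra hyb
    exact free' hsat x v b y hvx.symm hab hxy hvb hvy (fun h => hyb h.symm)
  · by_cases hxb : x = b
    · subst hxb
      right
      refine ⟨rfl, ?_⟩
      by_contra hya
      exact free' hsat x v a y hvx.symm hab.symm hxy hva hvy (fun h => hya h.symm)
    · exfalso
      by_cases hya : y = a
      · subst hya
        exact free' hsat y v b x hvy.symm hab hxy.symm hvb hvx (fun h => hxb h.symm)
      · by_cases hyb : y = b
        · subst hyb
          exact free' hsat y v a x hvy.symm hab.symm hxy.symm hva hvx (fun h => hxa h.symm)
        · -- x,y disjoint from a,b : derive a contradiction with unique saturation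
          have hax : ¬ G.Adj a x := by
            intro h
            exact free' hsat a v b x hva.symm hab h hvb hvx (fun h' => hxb h'.symm)
          have hnax : a ≠ x := fun h => hxa h.symm
          obtain ⟨C, -, hU⟩ := hsat.2 a x hnax hax
          have h1 := isCopy_dSub (G ⊔ SimpleGraph.fromEdgeSet {s(a, x)}) a v x b
            (lift_adj hva.symm) (new_adj hnax) (lift_adj hab)
            (lift_adj hvx) (lift_adj hvb) (fun h => hxb h)
          have h2 := isCopy_dSub (G ⊔ SimpleGraph.fromEdgeSet {s(a, x)}) x v a y
            (lift_adj hvx.symm) (new_adj' (Ne.symm hnax) Sym2.eq_swap) (lift_adj hxy)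
            (lift_adj hva) (lift_adj hvy) (fun h => hya h.symm)
          have heq := (hU _ h1).trans (hU _ h2).symm
          have hv := congrArg SimpleGraph.Subgraph.verts heq
          rw [dSub_verts, dSub_verts] at hv
          have hbmem : b ∈ ({x,v,a,y} : Set V) := by
            rw [← hv]; right; right; right; rfl
          rcases hbmem with h | h | h | h
          · exact hxb h.symm
          · exact hvb.ne' h
          · exact hab.ne' h
          · exact hyb h.symm

lemma mem_triangleVerts {v : V} : v ∈ triangleVerts G ↔
    ∃ a b, G.Adj v a ∧ G.Adj v b ∧ G.Adj a b := Iff.rfl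

/-- a vertex not in a triangle has an independent neighbourhood -/
lemma indep_nbhd {u x y : V} (hA : u ∉ triangleVerts G)
    (hx : G.Adj u x) (hy : G.Adj u y) (hxy : G.Adj x y) : False :=
  hA ⟨x, y, hx, hy, hxy⟩

end Sat

section Count

open Finset
open scoped Classical

variable {V : Type*} [Fintype V] {G : SimpleGraph V}

noncomputable def NF (G : SimpleGraph V) (v : V) : Finset V :=
  Finset.univ.filter (fun x => G.Adj v x)

noncomputable def Af (G : SimpleGraph V) : Finset V :=
  Finset.univ.filter (fun x => x ∈ triangleVerts G)

lemma mem_NF {v x : V} : x ∈ NF G v ↔ G.Adj v x := by simp [NF]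

lemma mem_Af {x : V} : x ∈ Af G ↔ x ∈ triangleVerts G := by simp [Af]

lemma common_card_two (hsat : UniquelySaturated diamond G) {v₀ z : V}
    (hA : v₀ ∉ triangleVerts G) (hzv : z ≠ v₀) (hnadj : ¬ G.Adj v₀ z)
    {p q : V} (hpq : p ≠ q) (hp : G.Adj v₀ p) (hq : G.Adj v₀ q)
    (hzp : G.Adj z p) (hzq : G.Adj z q) :
    (NF G v₀ ∩ NF G z).card = 2 := by
  have hsub : ({p, q} : Finset V) ⊆ NF G v₀ ∩ NF G z := by
    intro x hx
    rcases Finset.mem_insert.1 hx with rfl | hx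
    · exact Finset.mem_inter.2 ⟨mem_NF.2 hp, mem_NF.2 hzp⟩
    · rw [Finset.mem_singleton] at hx; subst hx
      exact Finset.mem_inter.2 ⟨mem_NF.2 hq, mem_NF.2 hzq⟩
  have h2 : 2 ≤ (NF G v₀ ∩ NF G z).card := by
    calc 2 = ({p, q} : Finset V).card := (Finset.card_pair hpq).symm
    _ ≤ _ := Finset.card_le_card hsub
  refine le_antisymm ?_ h2
  by_contra hlt
  push_neg at hlt
  obtain ⟨x, y, w, hx, hy, hw, hxy, hxw, hyw⟩ := Finset.two_lt_card_iff.1 hlt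
  rw [Finset.mem_inter, mem_NF, mem_NF] at hx hy hw
  exact three_common hsat (fun h => hzv h.symm) hnadj hx.1 hx.2 hy.1 hy.2 hw.1 hw.2 hxy hxw hyw

lemma upper_count (hsat : UniquelySaturated diamond G) {v₀ : V}
    (hA : v₀ ∉ triangleVerts G) :
    Fintype.card V ≤
      1 + (NF G v₀).card + (NF G v₀).card.choose 2 + 2 * ((NF G v₀) ∩ (Af G)).card := by
  set N := NF G v₀ with hN
  set Zc : Finset V := Finset.univ.filter (fun z => z ≠ v₀ ∧ ¬ G.Adj v₀ z ∧
    ∃ p q, p ≠ q ∧ G.Adj v₀ p ∧ G.Adj v₀ q ∧ G.Adj z p ∧ G.Adj z q) with hZc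
  set Zs : Finset V := Finset.univ.filter (fun z =>
    ∃ s m, G.Adj v₀ s ∧ G.Adj z s ∧ G.Adj z m ∧ G.Adj s m) with hZs
  -- covering
  have hcover : (Finset.univ : Finset V) ⊆ insert v₀ (N ∪ Zc ∪ Zs) := by
    intro z _
    by_cases h0 : z = v₀
    · exact Finset.mem_insert.2 (Or.inl h0)
    · by_cases h1 : G.Adj v₀ z
      · exact Finset.mem_insert.2 (Or.inr (Finset.mem_union.2 (Or.inl
          (Finset.mem_union.2 (Or.inl (mem_NF.2 h1))))))
      · rcases classify hsat (fun h => h0 h.symm) h1 with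
          ⟨p, q, hpq, hp, hq, hzp, hzq⟩ | ⟨s, m, h2, h3, h4, h5, h6⟩ | ⟨s, m, h2, h3, h4, h5, h6⟩
        · refine Finset.mem_insert.2 (Or.inr (Finset.mem_union.2 (Or.inl
            (Finset.mem_union.2 (Or.inr ?_)))))
          rw [hZc, Finset.mem_filter]
          exact ⟨Finset.mem_univ z, h0, h1, p, q, hpq, hp, hq, hzp, hzq⟩
        · exact absurd (mem_triangleVerts.2 ⟨s, m, h2, h4, h5⟩) hA
        · refine Finset.mem_insert.2 (Or.inr (Finset.mem_union.2 (Or.inr ?_)))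
          rw [hZs, Finset.mem_filter]
          exact ⟨Finset.mem_univ z, s, m, h3, h2, h4, h5⟩
  -- bound for Zc
  have hZcb : Zc.card ≤ N.card.choose 2 := by
    have : Zc.card ≤ (N.powersetCard 2).card := by
      apply Finset.card_le_card_of_injOn (fun z => N ∩ NF G z)
      · intro z hz
        rw [Finset.mem_coe, hZc, Finset.mem_filter] at hz
        obtain ⟨-, h0, h1, p, q, hpq, hp, hq, hzp, hzq⟩ := hz
        rw [Finset.mem_coe, Finset.mem_powersetCard]
        exact ⟨Finset.inter_subset_left,
          common_card_two hsat hA h0 h1 hpq hp hq hzp hzq⟩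
      · intro z hz z' hz' heq
        by_contra hne
        rw [Finset.mem_coe, hZc, Finset.mem_filter] at hz hz'
        obtain ⟨-, h0, h1, p, q, hpq, hp, hq, hzp, hzq⟩ := hz
        obtain ⟨-, h0', h1', -⟩ := hz'
        simp only at heq
        have hpmem : p ∈ N ∩ NF G z' := by
          rw [← heq]; exact Finset.mem_inter.2 ⟨mem_NF.2 hp, mem_NF.2 hzp⟩
        have hqmem : q ∈ N ∩ NF G z' := by
          rw [← heq]; exact Finset.mem_inter.2 ⟨mem_NF.2 hq, mem_NF.2 hzq⟩
        rw [Finset.mem_inter, mem_NF, mem_NF] at hpmem hqmem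
        have hnpq : ¬ G.Adj p q := fun h => hA ⟨p, q, hp, hq, h⟩
        exact three_common hsat hpq hnpq hp.symm hq.symm hzp.symm hzq.symm
          hpmem.2.symm hqmem.2.symm (Ne.symm h0) (Ne.symm h0') hne
    calc Zc.card ≤ (N.powersetCard 2).card := this
    _ = N.card.choose 2 := by rw [Finset.card_powersetCard]
  -- bound for Zs
  have hZsb : Zs.card ≤ 2 * (N ∩ Af G).card := by
    have hsub : Zs ⊆ (N ∩ Af G).biUnion (fun s =>
        Finset.univ.filter (fun x => ∃ m, G.Adj s x ∧ G.Adj x m ∧ G.Adj s m)) := by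
      intro z hz
      rw [hZs, Finset.mem_filter] at hz
      obtain ⟨-, s, m, h2, h3, h4, h5⟩ := hz
      refine Finset.mem_biUnion.2 ⟨s, ?_, ?_⟩
      · exact Finset.mem_inter.2 ⟨mem_NF.2 h2, mem_Af.2 ⟨z, m, h3.symm, h5, h4⟩⟩
      · rw [Finset.mem_filter]
        exact ⟨Finset.mem_univ z, m, h3.symm, h4, h5⟩
    have hbound : ∀ s ∈ N ∩ Af G,
        (Finset.univ.filter (fun x => ∃ m, G.Adj s x ∧ G.Adj x m ∧ G.Adj s m)).card ≤ 2 := by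
      intro s hs
      obtain ⟨β, γ, hsβ, hsγ, hβγ⟩ := mem_Af.1 (Finset.mem_inter.1 hs).2
      have : (Finset.univ.filter (fun x => ∃ m, G.Adj s x ∧ G.Adj x m ∧ G.Adj s m))
          ⊆ {β, γ} := by
        intro x hx
        rw [Finset.mem_filter] at hx
        obtain ⟨-, m, h1, h2, h3⟩ := hx
        rcases unique_triangle hsat hsβ hsγ hβγ h1 h3 h2 with ⟨rfl, -⟩ | ⟨rfl, -⟩
        · exact Finset.mem_insert.2 (Or.inl rfl)
        · exact Finset.mem_insert.2 (Or.inr (Finset.mem_singleton.2 rfl))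
      calc _ ≤ ({β, γ} : Finset V).card := Finset.card_le_card this
      _ ≤ 2 := Finset.card_insert_le β {γ}
    calc Zs.card ≤ ((N ∩ Af G).biUnion _).card := Finset.card_le_card hsub
    _ ≤ ∑ s ∈ N ∩ Af G, (Finset.univ.filter
        (fun x => ∃ m, G.Adj s x ∧ G.Adj x m ∧ G.Adj s m)).card := Finset.card_biUnion_le
    _ ≤ ∑ _s ∈ N ∩ Af G, 2 := Finset.sum_le_sum hbound
    _ = 2 * (N ∩ Af G).card := by rw [Finset.sum_const, smul_eq_mul, mul_comm]
  calc Fintype.card V = (Finset.univ : Finset V).card := rfl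
  _ ≤ (insert v₀ (N ∪ Zc ∪ Zs)).card := Finset.card_le_card hcover
  _ ≤ (N ∪ Zc ∪ Zs).card + 1 := Finset.card_insert_le _ _
  _ ≤ (N ∪ Zc).card + Zs.card + 1 := by gcongr; exact Finset.card_union_le _ _
  _ ≤ N.card + Zc.card + Zs.card + 1 := by gcongr; exact Finset.card_union_le _ _
  _ ≤ N.card + N.card.choose 2 + (2 * (N ∩ Af G).card) + 1 := by gcongr
  _ = 1 + N.card + N.card.choose 2 + 2 * (N ∩ Af G).card := by ring

noncomputable def bset (s : V) (hs : s ∈ triangleVerts G) : Finset V :=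
  {hs.choose, hs.choose_spec.choose}

lemma bset_spec {s : V} (hs : s ∈ triangleVerts G) {x : V} (hx : x ∈ bset s hs) :
    ∃ w, G.Adj s x ∧ G.Adj s w ∧ G.Adj x w ∧ w ∈ bset s hs := by
  obtain ⟨h1, h2, h3⟩ := hs.choose_spec.choose_spec
  rcases Finset.mem_insert.1 hx with rfl | hx
  · exact ⟨hs.choose_spec.choose, h1, h2, h3, Finset.mem_insert.2 (Or.inr (Finset.mem_singleton.2 rfl))⟩
  · rw [Finset.mem_singleton] at hx; subst hx
    exact ⟨hs.choose, h2, h1, h3.symm, Finset.mem_insert.2 (Or.inl rfl)⟩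

lemma bset_card {s : V} (hs : s ∈ triangleVerts G) : (bset s hs).card = 2 :=
  Finset.card_pair hs.choose_spec.choose_spec.2.2.ne

lemma bset_mem_A {s : V} (hs : s ∈ triangleVerts G) {x : V} (hx : x ∈ bset s hs) :
    x ∈ triangleVerts G := by
  obtain ⟨w, h1, h2, h3, -⟩ := bset_spec hs hx
  exact ⟨s, w, h1.symm, h3, h2⟩

lemma lower_count (hsat : UniquelySaturated diamond G) {u : V}
    (hA : u ∉ triangleVerts G) :
    1 + (NF G u).card + (NF G u).card.choose 2 + 2 * ((NF G u) ∩ (Af G)).card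
      ≤ Fintype.card V := by
  set N := NF G u with hN
  -- partner for each 2-subset of N
  have hex : ∀ P ∈ N.powersetCard 2, ∃ x, x ≠ u ∧ ∀ y ∈ P, G.Adj x y := by
    intro P hP
    rw [Finset.mem_powersetCard] at hP
    obtain ⟨hsub, hcard⟩ := hP
    obtain ⟨p, q, hpq, rfl⟩ := Finset.card_eq_two.1 hcard
    have hup : G.Adj u p := mem_NF.1 (hsub (Finset.mem_insert.2 (Or.inl rfl)))
    have huq : G.Adj u q := mem_NF.1 (hsub (Finset.mem_insert.2 (Or.inr (Finset.mem_singleton.2 rfl))))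
    have hnpq : ¬ G.Adj p q := fun h => indep_nbhd hA hup huq h
    have hmem : ∀ x p' q', G.Adj x p' → G.Adj x q' →
        ∀ y ∈ ({p', q'} : Finset V), G.Adj x y := by
      intro x p' q' h1 h2 y hy
      rcases Finset.mem_insert.1 hy with rfl | hy
      · exact h1
      · rw [Finset.mem_singleton] at hy; subst hy; exact h2
    rcases classify hsat hpq hnpq with
      ⟨α, β, hαβ, hpα, hpβ, hqα, hqβ⟩ | ⟨s, m, h1, h2, h3, h4, h5⟩ | ⟨s, m, h1, h2, h3, h4, h5⟩
    · by_cases hαu : α = u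
      · subst hαu
        exact ⟨β, Ne.symm hαβ, hmem β p q hpβ.symm hqβ.symm⟩
      · exact ⟨α, hαu, hmem α p q hpα.symm hqα.symm⟩
    · -- triangle p s m, s common
      refine ⟨s, ?_, hmem s p q h1.symm h2.symm⟩
      intro hsu; subst hsu
      exact indep_nbhd hA h1.symm h4 h3
    · refine ⟨s, ?_, hmem s p q h2.symm h1.symm⟩
      intro hsu; subst hsu
      exact indep_nbhd hA h1.symm h4 h3
  set xP : Finset V → V := fun P =>
    if h : ∃ x, x ≠ u ∧ ∀ y ∈ P, G.Adj x y then h.choose else u with hxP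
  have hxP_spec : ∀ P ∈ N.powersetCard 2, (xP P) ≠ u ∧ ∀ y ∈ P, G.Adj (xP P) y := by
    intro P hP
    have h := hex P hP
    rw [hxP]; simp only [dif_pos h]
    exact h.choose_spec
  -- x P is never adjacent to u
  have hxP_nadj : ∀ P ∈ N.powersetCard 2, ¬ G.Adj u (xP P) := by
    intro P hP hadj
    obtain ⟨hne, hall⟩ := hxP_spec P hP
    rw [Finset.mem_powersetCard] at hP
    obtain ⟨p, q, hpq, rfl⟩ := Finset.card_eq_two.1 hP.2
    have hup : G.Adj u p := mem_NF.1 (hP.1 (Finset.mem_insert.2 (Or.inl rfl)))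
    exact indep_nbhd hA hadj hup (hall p (Finset.mem_insert.2 (Or.inl rfl)))
  set XP := (N.powersetCard 2).image xP with hXP
  have hXP_card : XP.card = N.card.choose 2 := by
    rw [hXP, Finset.card_image_of_injOn, Finset.card_powersetCard]
    intro P hP P' hP' heq
    by_contra hne
    rw [Finset.mem_coe] at hP hP'
    have hP0 := hP
    have hP'0 := hP'
    obtain ⟨hxu, hall⟩ := hxP_spec P hP
    obtain ⟨-, hall'⟩ := hxP_spec P' hP'
    rw [heq] at hall hxu
    -- find three distinct elements of P' ∪ P
    rw [Finset.mem_powersetCard] at hP hP'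
    obtain ⟨p, q, hpq, hPep⟩ := Finset.card_eq_two.1 hP.2
    have hnsub : ¬ P' ⊆ P := by
      intro hss
      exact hne ((Finset.eq_of_subset_of_card_le hss (le_of_eq (hP.2.trans hP'.2.symm))).symm)
    obtain ⟨e, heP', heP⟩ := Finset.not_subset.1 hnsub
    have hep : e ≠ p := fun h => heP (h ▸ hPep ▸ Finset.mem_insert.2 (Or.inl rfl))
    have heq' : e ≠ q := fun h => heP (h ▸ hPep ▸ Finset.mem_insert.2
      (Or.inr (Finset.mem_singleton.2 rfl)))
    have hmp : p ∈ P := hPep ▸ Finset.mem_insert.2 (Or.inl rfl)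
    have hmq : q ∈ P := hPep ▸ Finset.mem_insert.2 (Or.inr (Finset.mem_singleton.2 rfl))
    have hue : G.Adj u e := mem_NF.1 (hP'.1 heP')
    have hup : G.Adj u p := mem_NF.1 (hP.1 hmp)
    have huq : G.Adj u q := mem_NF.1 (hP.1 hmq)
    set x := xP P' with hx
    have hxe : G.Adj x e := hall' e heP'
    have hxp : G.Adj x p := hall p hmp
    have hxq : G.Adj x q := hall q hmq
    have hxnadju : ¬ G.Adj x u := fun h => (hxP_nadj P' hP'0) h.symm
    exact three_common hsat hxu hxnadju hxp hup hxq huq hxe hue hpq hep.symm heq'.symm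
  -- the two other vertices of each triangle hit by N
  set Bf : V → Finset V := fun s =>
    if h : s ∈ triangleVerts G then bset s h else ∅ with hBf
  have hBf_spec : ∀ s, s ∈ triangleVerts G → ∀ x ∈ Bf s,
      ∃ w, G.Adj s x ∧ G.Adj s w ∧ G.Adj x w ∧ w ∈ Bf s := by
    intro s hs x hx
    rw [hBf] at hx ⊢
    simp only [dif_pos hs] at hx ⊢
    exact bset_spec hs hx
  have hBf_card : ∀ s, s ∈ triangleVerts G → (Bf s).card = 2 := by
    intro s hs
    rw [hBf]; simp only [dif_pos hs]; exact bset_card hs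
  set B := (N ∩ Af G).biUnion Bf with hB
  have hAdjU : ∀ s ∈ N ∩ Af G, G.Adj u s ∧ s ∈ triangleVerts G := by
    intro s hs
    rw [Finset.mem_inter, mem_NF, mem_Af] at hs
    exact hs
  have hdisjBf : ∀ s ∈ N ∩ Af G, ∀ s' ∈ N ∩ Af G, s ≠ s' → Disjoint (Bf s) (Bf s') := by
    intro s hs s' hs' hne
    rw [Finset.disjoint_left]
    intro x hx hx'
    obtain ⟨hus, hsA⟩ := hAdjU s hs
    obtain ⟨hus', hsA'⟩ := hAdjU s' hs'
    obtain ⟨w, h1, h2, h3, -⟩ := hBf_spec s hsA x hx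
    obtain ⟨w', h1', h2', h3', -⟩ := hBf_spec s' hsA' x hx'
    rcases unique_triangle hsat h1.symm h3 h2 h1'.symm h3' h2' with ⟨rfl, -⟩ | ⟨rfl, -⟩
    · exact hne rfl
    · exact indep_nbhd hA hus hus' h2
  have hB_card : B.card = 2 * (N ∩ Af G).card := by
    rw [hB, Finset.card_biUnion hdisjBf]
    rw [Finset.sum_congr rfl (fun s hs => hBf_card s (hAdjU s hs).2)]
    rw [Finset.sum_const, smul_eq_mul, mul_comm]
  -- memberships and disjointness
  have huN : u ∉ N := by rw [hN, mem_NF]; exact fun h => G.irrefl h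
  have huXP : u ∉ XP := by
    rw [hXP]
    intro h
    obtain ⟨P, hP, hPu⟩ := Finset.mem_image.1 h
    exact (hxP_spec P hP).1 hPu
  have hBprop : ∀ x ∈ B, ∃ s w, G.Adj u s ∧ G.Adj s x ∧ G.Adj s w ∧ G.Adj x w := by
    intro x hx
    rw [hB] at hx
    obtain ⟨s, hs, hxs⟩ := Finset.mem_biUnion.1 hx
    obtain ⟨hus, hsA⟩ := hAdjU s hs
    obtain ⟨w, h1, h2, h3, -⟩ := hBf_spec s hsA x hxs
    exact ⟨s, w, hus, h1, h2, h3⟩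
  have huB : u ∉ B := by
    intro h
    obtain ⟨s, w, hus, h1, h2, h3⟩ := hBprop u h
    exact indep_nbhd hA hus h3 h2
  have hNXP : Disjoint N XP := by
    rw [Finset.disjoint_left]
    intro x hx hx'
    rw [hXP] at hx'
    obtain ⟨P, hP, rfl⟩ := Finset.mem_image.1 hx'
    have hP2 := (Finset.mem_powersetCard.1 hP)
    have : 0 < P.card := by rw [hP2.2]; norm_num
    obtain ⟨y, hy⟩ := Finset.card_pos.1 this
    exact indep_nbhd hA (mem_NF.1 hx) (mem_NF.1 (hP2.1 hy)) ((hxP_spec P hP).2 y hy)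
  have hNB : Disjoint N B := by
    rw [Finset.disjoint_left]
    intro x hx hx'
    obtain ⟨s, w, hus, h1, h2, h3⟩ := hBprop x hx'
    exact indep_nbhd hA (mem_NF.1 hx) hus h1.symm
  have hXPB : Disjoint XP B := by
    rw [Finset.disjoint_left]
    intro x hx hx'
    rw [hXP] at hx
    obtain ⟨P, hP, rfl⟩ := Finset.mem_image.1 hx
    set x := xP P with hxdef
    obtain ⟨s, w, hus, h1, h2, h3⟩ := hBprop x hx'
    have hP2 := (Finset.mem_powersetCard.1 hP)
    obtain ⟨p, q, hpq, hPform⟩ := Finset.card_eq_two.1 hP2.2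
    have hmp : p ∈ P := hPform ▸ Finset.mem_insert.2 (Or.inl rfl)
    have hmq : q ∈ P := hPform ▸ Finset.mem_insert.2 (Or.inr (Finset.mem_singleton.2 rfl))
    -- choose y ∈ P with y ≠ s
    obtain ⟨y, hyP, hys⟩ : ∃ y, y ∈ P ∧ y ≠ s := by
      by_cases hps : p = s
      · exact ⟨q, hmq, fun h => hpq (hps ▸ h ▸ rfl)⟩
      · exact ⟨p, hmp, hps⟩
    have huy : G.Adj u y := mem_NF.1 (hP2.1 hyP)
    have hxy : G.Adj x y := (hxP_spec P hP).2 y hyP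
    have hnux : ¬ G.Adj u x := hxP_nadj P hP
    have hnux' : u ≠ x := fun h => (hxP_spec P hP).1 h.symm
    have hnuw : ¬ G.Adj u w := fun h => indep_nbhd hA h hus h2.symm
    have hnuw' : u ≠ w := fun h => hnux (h ▸ h3).symm
    exact only_nbr hsat h1 h2 h3 hus huy hxy.symm hys hnux hnux' hnuw hnuw'
  -- assemble
  have hunion : u ∉ N ∪ XP ∪ B := by
    rw [Finset.mem_union, Finset.mem_union]
    rintro ((h | h) | h)
    · exact huN h
    · exact huXP h
    · exact huB h
  have hcards : (insert u (N ∪ XP ∪ B)).card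
      = 1 + N.card + N.card.choose 2 + 2 * ((N ∩ Af G)).card := by
    rw [Finset.card_insert_of_notMem hunion]
    rw [Finset.card_union_of_disjoint (by
      rw [Finset.disjoint_union_left]; exact ⟨hNB, hXPB⟩)]
    rw [Finset.card_union_of_disjoint hNXP]
    rw [hXP_card, hB_card]
    ring
  calc 1 + N.card + N.card.choose 2 + 2 * ((N ∩ Af G)).card
      = (insert u (N ∪ XP ∪ B)).card := hcards.symm
    _ ≤ (Finset.univ : Finset V).card := Finset.card_le_card (Finset.subset_univ _)
    _ = Fintype.card V := rfl

noncomputable def TriF (G : SimpleGraph V) [Fintype V] : Finset (Finset V) :=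
  Set.Finite.toFinset (Set.toFinite (G.cliqueSet 3))

lemma mem_TriF {T : Finset V} : T ∈ TriF G ↔ G.IsNClique 3 T := by
  rw [TriF, Set.Finite.mem_toFinset]
  exact SimpleGraph.mem_cliqueSet_iff

lemma TriF_card_eq : (TriF G).card = (G.cliqueSet 3).ncard := by
  rw [TriF, ← Set.ncard_coe_finset, Set.Finite.coe_toFinset]

lemma triangle_mem_TriF {a b c : V} (hab : G.Adj a b) (hac : G.Adj a c) (hbc : G.Adj b c) :
    ({a, b, c} : Finset V) ∈ TriF G :=
  mem_TriF.2 (SimpleGraph.is3Clique_triple_iff.2 ⟨hab, hac, hbc⟩)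

lemma TriF_structure {T : Finset V} (hT : T ∈ TriF G) {x : V} (hx : x ∈ T) :
    ∃ y z, G.Adj x y ∧ G.Adj x z ∧ G.Adj y z ∧ T = {x, y, z} := by
  obtain ⟨a, b, c, hab, hac, hbc, rfl⟩ := SimpleGraph.is3Clique_iff.1 (mem_TriF.1 hT)
  have hmem : x = a ∨ x = b ∨ x = c := by simpa using hx
  rcases hmem with rfl | rfl | rfl
  · exact ⟨b, c, hab, hac, hbc, rfl⟩
  · refine ⟨a, c, hab.symm, hbc, hac, ?_⟩
    ext t; simp; tauto
  · refine ⟨a, b, hac.symm, hbc.symm, hab, ?_⟩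
    ext t; simp; tauto

lemma TriF_vert_mem_A {T : Finset V} (hT : T ∈ TriF G) {x : V} (hx : x ∈ T) :
    x ∈ triangleVerts G := by
  obtain ⟨y, z, h1, h2, h3, -⟩ := TriF_structure hT hx
  exact ⟨y, z, h1, h2, h3⟩

lemma TriF_card_three {T : Finset V} (hT : T ∈ TriF G) : T.card = 3 :=
  (mem_TriF.1 hT).2

/-- two triangles sharing a vertex are equal -/
lemma TriF_unique (hsat : UniquelySaturated diamond G) {T T' : Finset V}
    (hT : T ∈ TriF G) (hT' : T' ∈ TriF G) {x : V} (hx : x ∈ T) (hx' : x ∈ T') :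
    T = T' := by
  obtain ⟨y, z, h1, h2, h3, rfl⟩ := TriF_structure hT hx
  obtain ⟨y', z', h1', h2', h3', rfl⟩ := TriF_structure hT' hx'
  rcases unique_triangle hsat h1 h2 h3 h1' h2' h3' with ⟨rfl, rfl⟩ | ⟨rfl, rfl⟩
  · rfl
  · ext t; simp; tauto

noncomputable def HitF (G : SimpleGraph V) [Fintype V] (u : V) : Finset (Finset V) :=
  (TriF G).filter (fun T => ∃ x ∈ T, G.Adj u x)

noncomputable def MissF (G : SimpleGraph V) [Fintype V] (u : V) : Finset (Finset V) :=
  TriF G \ HitF G u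

lemma hit_card (hsat : UniquelySaturated diamond G) {u : V} (hA : u ∉ triangleVerts G) :
    (HitF G u).card = ((NF G u) ∩ (Af G)).card := by
  apply le_antisymm
  · set ff : Finset V → V := fun T => if h : ∃ x ∈ T, G.Adj u x then h.choose else u with hff
    have hff_spec : ∀ T ∈ HitF G u, ff T ∈ T ∧ G.Adj u (ff T) := by
      intro T hT
      rw [HitF, Finset.mem_filter] at hT
      rw [hff]; simp only [dif_pos hT.2]
      exact ⟨hT.2.choose_spec.1, hT.2.choose_spec.2⟩
    apply Finset.card_le_card_of_injOn ff
    · intro T hT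
      have hTT : T ∈ TriF G := (Finset.mem_filter.1 hT).1
      obtain ⟨h1, h2⟩ := hff_spec T hT
      exact Finset.mem_inter.2 ⟨mem_NF.2 h2, mem_Af.2 (TriF_vert_mem_A hTT h1)⟩
    · intro T hT T' hT' heq
      rw [Finset.mem_coe] at hT hT'
      obtain ⟨h1, -⟩ := hff_spec T hT
      obtain ⟨h1', -⟩ := hff_spec T' hT'
      rw [heq] at h1
      exact TriF_unique hsat (Finset.mem_filter.1 hT).1 (Finset.mem_filter.1 hT').1 h1 h1'
  · set gg : V → Finset V := fun a => if h : a ∈ triangleVerts G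
      then insert a (bset a h) else ∅ with hgg
    have hgg_spec : ∀ a, (h : a ∈ triangleVerts G) →
        a ∈ gg a ∧ gg a ∈ TriF G := by
      intro a h
      rw [hgg]; simp only [dif_pos h]
      constructor
      · exact Finset.mem_insert_self _ _
      · obtain ⟨h1, h2, h3⟩ := h.choose_spec.choose_spec
        exact triangle_mem_TriF h1 h2 h3
    apply Finset.card_le_card_of_injOn gg
    · intro a ha
      rw [Finset.mem_coe, Finset.mem_inter, mem_NF, mem_Af] at ha
      obtain ⟨h1, h2⟩ := hgg_spec a ha.2
      rw [Finset.mem_coe, HitF, Finset.mem_filter]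
      exact ⟨h2, a, h1, ha.1⟩
    · intro a ha a' ha' heq
      rw [Finset.mem_coe, Finset.mem_inter, mem_NF, mem_Af] at ha ha'
      by_contra hne
      obtain ⟨h1, h2⟩ := hgg_spec a ha.2
      obtain ⟨h1', h2'⟩ := hgg_spec a' ha'.2
      rw [← heq] at h1'
      -- a and a' are distinct vertices of the triangle gg a, hence adjacent
      obtain ⟨y, z, hy, hz, hyz, hform⟩ := TriF_structure h2 h1
      have : a' = y ∨ a' = z := by
        have := hform ▸ h1'
        simp only [Finset.mem_insert, Finset.mem_singleton] at this
        tauto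
      rcases this with rfl | rfl
      · exact indep_nbhd hA ha.1 ha'.1 hy
      · exact indep_nbhd hA ha.1 ha'.1 hz

lemma no_deep (hsat : UniquelySaturated diamond G) {u : V} (hA : u ∉ triangleVerts G)
    (hc : 0 < ((NF G u) ∩ (Af G)).card) :
    ∀ w, G.Adj u w → w ∉ triangleVerts G → ∃ T ∈ MissF G u, ∃ p ∈ T, G.Adj w p := by
  intro w huw hwA
  by_contra hcon
  push_neg at hcon
  -- step a : w has no neighbours in any triangle
  have hwA0 : NF G w ∩ Af G = ∅ := by
    apply Finset.eq_empty_iff_forall_notMem.2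
    intro y hy
    rw [Finset.mem_inter, mem_NF, mem_Af] at hy
    obtain ⟨hwy, hyA⟩ := hy
    obtain ⟨h1, h2, h3⟩ := hyA.choose_spec.choose_spec
    set β := hyA.choose
    set γ := hyA.choose_spec.choose
    have hTy : insert y (bset y hyA) ∈ TriF G := triangle_mem_TriF h1 h2 h3
    have hnuy : ¬ G.Adj u y := fun h => indep_nbhd hA h huw hwy.symm
    by_cases hmiss : insert y (bset y hyA) ∈ HitF G u
    · obtain ⟨-, x, hxT, hux⟩ := Finset.mem_filter.1 hmiss
      have hxcases : x = y ∨ x = β ∨ x = γ := by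
        have : bset y hyA = {β, γ} := rfl
        rw [this] at hxT
        simp only [Finset.mem_insert, Finset.mem_singleton] at hxT
        exact hxT
      have hβA : β ∈ triangleVerts G := ⟨y, γ, h1.symm, h3, h2⟩
      have hγA : γ ∈ triangleVerts G := ⟨y, β, h2.symm, h3.symm, h1⟩
      rcases hxcases with rfl | rfl | rfl
      · exact hnuy hux
      · exact only_nbr hsat h1.symm h3 h2 hux huw hwy
          (fun h => hwA (h ▸ hβA)) hnuy (fun h => hA (h ▸ hyA))
          (fun h => indep_nbhd hA h hux h3.symm) (fun h => hA (h ▸ hγA))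
      · exact only_nbr hsat h2.symm h3.symm h1 hux huw hwy
          (fun h => hwA (h ▸ hγA)) hnuy (fun h => hA (h ▸ hyA))
          (fun h => indep_nbhd hA h hux h3) (fun h => hA (h ▸ hβA))
    · exact hcon _ (Finset.mem_sdiff.2 ⟨hTy, hmiss⟩) y (Finset.mem_insert_self _ _) hwy
  -- step b : deg w = deg u
  have hpnotinA : ∀ p, G.Adj w p → p ∉ triangleVerts G := by
    intro p hwp hpA
    have : p ∈ NF G w ∩ Af G := Finset.mem_inter.2 ⟨mem_NF.2 hwp, mem_Af.2 hpA⟩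
    rw [hwA0] at this
    exact Finset.notMem_empty p this
  have hmap1 : ((NF G w).erase u).card ≤ ((NF G u).erase w).card := by
    have hex1 : ∀ p ∈ (NF G w).erase u, ∃ y, y ≠ w ∧ G.Adj u y ∧ G.Adj p y := by
      intro p hp
      rw [Finset.mem_erase, mem_NF] at hp
      obtain ⟨hpu, hwp⟩ := hp
      have hnup : ¬ G.Adj u p := fun h => indep_nbhd hA h huw hwp.symm
      rcases classify hsat (Ne.symm hpu) hnup with
        ⟨α, β, hαβ, h1, h2, h3, h4⟩ | ⟨s, m, h1, h2, h3, h4, h5⟩ | ⟨s, m, h1, h2, h3, h4, h5⟩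
      · by_cases hαw : α = w
        · exact ⟨β, fun h => hαβ (hαw.trans h.symm), h2, h4⟩
        · exact ⟨α, hαw, h1, h3⟩
      · exact absurd (indep_nbhd hA h1 h3 h4) (fun h => h)
      · exact absurd (⟨s, m, h1, h3, h4⟩ : p ∈ triangleVerts G) (hpnotinA p hwp)
    set Y : V → V := fun p =>
      if h : ∃ y, y ≠ w ∧ G.Adj u y ∧ G.Adj p y then h.choose else u with hY
    have hY_spec : ∀ p ∈ (NF G w).erase u, (Y p) ≠ w ∧ G.Adj u (Y p) ∧ G.Adj p (Y p) := by
      intro p hp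
      have h := hex1 p hp
      rw [hY]; simp only [dif_pos h]
      exact h.choose_spec
    apply Finset.card_le_card_of_injOn Y
    · intro p hp
      obtain ⟨hy1, hy2, -⟩ := hY_spec p hp
      exact Finset.mem_erase.2 ⟨hy1, mem_NF.2 hy2⟩
    · intro p hp p' hp' heq
      by_contra hne
      rw [Finset.mem_coe] at hp hp'
      obtain ⟨hy1, hy2, hy3⟩ := hY_spec p hp
      obtain ⟨-, -, hy3'⟩ := hY_spec p' hp'
      rw [heq] at hy1 hy2 hy3
      set y := Y p' with hydef
      rw [Finset.mem_erase, mem_NF] at hp hp'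
      have hnwy : ¬ G.Adj w y := fun h => indep_nbhd hA huw hy2 h
      exact three_common hsat (Ne.symm hy1) hnwy huw.symm hy2.symm hp.2 hy3.symm
        hp'.2 hy3'.symm (Ne.symm hp.1) (Ne.symm hp'.1) hne
  have hmap2 : ((NF G u).erase w).card ≤ ((NF G w).erase u).card := by
    have hex2 : ∀ y ∈ (NF G u).erase w, ∃ r, r ≠ u ∧ G.Adj w r ∧ G.Adj y r := by
      intro y hy
      rw [Finset.mem_erase, mem_NF] at hy
      obtain ⟨hyw, huy⟩ := hy
      have hnwy : ¬ G.Adj w y := fun h => indep_nbhd hA huw huy h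
      rcases classify hsat (Ne.symm hyw) hnwy with
        ⟨α, β, hαβ, h1, h2, h3, h4⟩ | ⟨s, m, h1, h2, h3, h4, h5⟩ | ⟨s, m, h1, h2, h3, h4, h5⟩
      · by_cases hαu : α = u
        · exact ⟨β, fun h => hαβ (hαu.trans h.symm), h2, h4⟩
        · exact ⟨α, hαu, h1, h3⟩
      · exact absurd (⟨s, m, h1, h3, h4⟩ : w ∈ triangleVerts G) hwA
      · -- s is in a triangle and adjacent to w : contradiction with hwA0
        have : s ∈ NF G w ∩ Af G :=
          Finset.mem_inter.2 ⟨mem_NF.2 h2, mem_Af.2 ⟨y, m, h1.symm, h4, h3⟩⟩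
        rw [hwA0] at this
        exact absurd this (Finset.notMem_empty s)
    set R : V → V := fun y =>
      if h : ∃ r, r ≠ u ∧ G.Adj w r ∧ G.Adj y r then h.choose else u with hR
    have hR_spec : ∀ y ∈ (NF G u).erase w, (R y) ≠ u ∧ G.Adj w (R y) ∧ G.Adj y (R y) := by
      intro y hy
      have h := hex2 y hy
      rw [hR]; simp only [dif_pos h]
      exact h.choose_spec
    apply Finset.card_le_card_of_injOn R
    · intro y hy
      obtain ⟨hr1, hr2, -⟩ := hR_spec y hy
      exact Finset.mem_erase.2 ⟨hr1, mem_NF.2 hr2⟩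
    · intro y hy y' hy' heq
      by_contra hne
      rw [Finset.mem_coe] at hy hy'
      obtain ⟨hr1, hr2, hr3⟩ := hR_spec y hy
      obtain ⟨-, -, hr3'⟩ := hR_spec y' hy'
      rw [heq] at hr1 hr2 hr3
      set r := R y' with hrdef
      rw [Finset.mem_erase, mem_NF] at hy hy'
      have hnur : ¬ G.Adj u r := fun h => indep_nbhd hA h huw hr2.symm
      exact three_common hsat (Ne.symm hr1) hnur huw hr2.symm hy.2 hr3.symm
        hy'.2 hr3'.symm (Ne.symm hy.1) (Ne.symm hy'.1) hne
  have hdeg : (NF G w).card = (NF G u).card := by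
    have h1 : u ∈ NF G w := mem_NF.2 huw.symm
    have h2 : w ∈ NF G u := mem_NF.2 huw
    have e1 := Finset.card_erase_of_mem h1
    have e2 := Finset.card_erase_of_mem h2
    have c1 : 0 < (NF G w).card := Finset.card_pos.2 ⟨u, h1⟩
    have c2 : 0 < (NF G u).card := Finset.card_pos.2 ⟨w, h2⟩
    omega
  -- step c : contradiction between the two counts
  have hlow := lower_count hsat hA
  have hupp := upper_count hsat hwA
  rw [hwA0, hdeg] at hupp
  simp only [Finset.card_empty, mul_zero, add_zero] at hupp
  omega

lemma deg_bound (hsat : UniquelySaturated diamond G) {u : V} (hA : u ∉ triangleVerts G)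
    (hc : 0 < ((NF G u) ∩ (Af G)).card) :
    ((NF G u) \ (Af G)).card ≤ 6 * (MissF G u).card := by
  have hkey := no_deep hsat hA hc
  have hsub : (NF G u) \ (Af G) ⊆
      (MissF G u).biUnion (fun T => T.biUnion (fun p => NF G p ∩ NF G u)) := by
    intro w hw
    rw [Finset.mem_sdiff, mem_NF] at hw
    obtain ⟨huw, hwnA⟩ := hw
    have hwA : w ∉ triangleVerts G := fun h => hwnA (mem_Af.2 h)
    obtain ⟨T, hT, p, hp, hwp⟩ := hkey w huw hwA
    apply Finset.mem_biUnion.2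
    refine ⟨T, hT, Finset.mem_biUnion.2 ⟨p, hp, ?_⟩⟩
    exact Finset.mem_inter.2 ⟨mem_NF.2 hwp.symm, mem_NF.2 huw⟩
  have hper : ∀ T ∈ MissF G u, ∀ p ∈ T, (NF G p ∩ NF G u).card ≤ 2 := by
    intro T hT p hp
    rw [MissF, Finset.mem_sdiff] at hT
    obtain ⟨hTri, hnothit⟩ := hT
    have hnup : ¬ G.Adj u p := by
      intro h
      exact hnothit (Finset.mem_filter.2 ⟨hTri, p, hp, h⟩)
    have hune : u ≠ p := fun h => hA (h ▸ TriF_vert_mem_A hTri hp)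
    by_contra hgt
    push_neg at hgt
    obtain ⟨x, y, z, hx, hy, hz, hxy, hxz, hyz⟩ := Finset.two_lt_card_iff.1 hgt
    rw [Finset.mem_inter, mem_NF, mem_NF] at hx hy hz
    exact three_common hsat hune hnup hx.2 hx.1 hy.2 hy.1 hz.2 hz.1 hxy hxz hyz
  calc ((NF G u) \ (Af G)).card
      ≤ ((MissF G u).biUnion (fun T => T.biUnion (fun p => NF G p ∩ NF G u))).card :=
        Finset.card_le_card hsub
    _ ≤ ∑ T ∈ MissF G u, (T.biUnion (fun p => NF G p ∩ NF G u)).card :=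
        Finset.card_biUnion_le
    _ ≤ ∑ T ∈ MissF G u, 6 := by
        apply Finset.sum_le_sum
        intro T hT
        calc (T.biUnion (fun p => NF G p ∩ NF G u)).card
            ≤ ∑ p ∈ T, (NF G p ∩ NF G u).card := Finset.card_biUnion_le
          _ ≤ ∑ _p ∈ T, 2 := Finset.sum_le_sum (hper T hT)
          _ = 2 * T.card := by rw [Finset.sum_const, smul_eq_mul, mul_comm]
          _ = 6 := by rw [TriF_card_three (Finset.mem_sdiff.1 hT).1]
    _ = 6 * (MissF G u).card := by rw [Finset.sum_const, smul_eq_mul, mul_comm]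

lemma two_choose (d : ℕ) : 2 * d.choose 2 + d = d * d := by
  cases d with
  | zero => rfl
  | succ n =>
    rw [Nat.choose_two_right]
    have h2 : 2 ∣ (n+1) * ((n+1) - 1) := by
      simp only [Nat.add_sub_cancel]
      rw [mul_comm]
      exact (Nat.even_mul_succ_self n).two_dvd
    rw [Nat.mul_div_cancel' h2]
    simp only [Nat.add_sub_cancel]
    ring

end Count

theorem stmt10 {V : Type*} [Fintype V] (G : SimpleGraph V)
    (hsat : UniquelySaturated diamond G)
    (k : ℕ) (hk : 2 ≤ k) (hcount : (G.cliqueSet 3).ncard = k)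
    (t : ℕ)
    (ht : t = sInf {m : ℕ | ∃ u : V, u ∉ triangleVerts G ∧
      (∃ a ∈ triangleVerts G, G.Adj u a) ∧
      m = k - (G.neighborSet u ∩ triangleVerts G).ncard}) :
    2 * Fintype.card V ≤ k ^ 2 + (10 * t + 5) * k + 25 * t ^ 2 + 7 * t + 2 := by
  classical
  set S := {m : ℕ | ∃ u : V, u ∉ triangleVerts G ∧
      (∃ a ∈ triangleVerts G, G.Adj u a) ∧
      m = k - (G.neighborSet u ∩ triangleVerts G).ncard} with hSdef
  have hkTri : (TriF G).card = k := TriF_card_eq.trans hcount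
  by_cases hS : S = ∅
  · -- the set is empty : t = 0 and every vertex lies in a triangle
    have ht0 : t = 0 := by rw [ht, hS, Nat.sInf_empty]
    have hVA : ∀ v : V, v ∈ triangleVerts G := by
      intro v
      by_contra hv
      have hSne : ∀ a, a ∈ triangleVerts G → ¬ G.Adj v a := by
        intro a haA hadj
        have hmem : (k - (G.neighborSet v ∩ triangleVerts G).ncard) ∈ S :=
          ⟨v, hv, ⟨a, haA, hadj⟩, rfl⟩
        rw [hS] at hmem
        exact hmem
      have hTpos : 0 < (TriF G).card := by rw [hkTri]; omega
      obtain ⟨T, hT⟩ := Finset.card_pos.1 hTpos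
      have hTc : 0 < T.card := by rw [TriF_card_three hT]; omega
      obtain ⟨a₀, ha₀⟩ := Finset.card_pos.1 hTc
      have ha₀A := TriF_vert_mem_A hT ha₀
      have hva : v ≠ a₀ := fun h => hv (h ▸ ha₀A)
      have hnadj : ¬ G.Adj v a₀ := hSne a₀ ha₀A
      rcases classify hsat hva hnadj with
        ⟨p, q, hpq, h1, h2, h3, h4⟩ | ⟨s, m, h1, h2, h3, h4, h5⟩ | ⟨s, m, h1, h2, h3, h4, h5⟩
      · by_cases hpA : p ∈ triangleVerts G
        · exact hSne p hpA h1
        · have hmem : (k - (G.neighborSet p ∩ triangleVerts G).ncard) ∈ S :=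
            ⟨p, hpA, ⟨a₀, ha₀A, h3.symm⟩, rfl⟩
          rw [hS] at hmem
          exact hmem
      · exact hv ⟨s, m, h1, h3, h4⟩
      · exact hSne s ⟨a₀, m, h1.symm, h4, h3⟩ h2
    have hn3k : Fintype.card V ≤ 3 * k := by
      have hcov : (Finset.univ : Finset V) ⊆ (TriF G).biUnion id := by
        intro v _
        have hvA := hVA v
        obtain ⟨h1, h2, h3⟩ := hvA.choose_spec.choose_spec
        exact Finset.mem_biUnion.2 ⟨insert v {hvA.choose, hvA.choose_spec.choose},
          triangle_mem_TriF h1 h2 h3, Finset.mem_insert_self _ _⟩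
      calc Fintype.card V = (Finset.univ : Finset V).card := rfl
        _ ≤ ((TriF G).biUnion id).card := Finset.card_le_card hcov
        _ ≤ ∑ T ∈ TriF G, (id T).card := Finset.card_biUnion_le
        _ = ∑ T ∈ TriF G, 3 := Finset.sum_congr rfl (fun T hT => TriF_card_three hT)
        _ = 3 * k := by rw [Finset.sum_const, smul_eq_mul, mul_comm, hkTri]
    have hkk : k ≤ k * k := Nat.le_mul_of_pos_left k (by omega)
    have hk2 : k ^ 2 = k * k := sq k
    subst ht0
    simp only [mul_zero, zero_add, Nat.zero_mul, add_zero, Nat.mul_zero, pow_two]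
    omega
  · -- the set is nonempty : pick the minimiser
    have hne : S.Nonempty := Set.nonempty_iff_ne_empty.2 hS
    have htmem : t ∈ S := by rw [ht]; exact Nat.sInf_mem hne
    obtain ⟨u, huA, ⟨a₀, ha₀A, hua₀⟩, htval⟩ := htmem
    have hncd : (G.neighborSet u ∩ triangleVerts G).ncard = ((NF G u) ∩ (Af G)).card := by
      rw [← Set.ncard_coe_finset]
      congr 1
      ext x
      simp [NF, Af, SimpleGraph.mem_neighborSet]
    rw [hncd] at htval
    set c := ((NF G u) ∩ (Af G)).card with hc
    set d := (NF G u).card with hd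
    have hcpos : 0 < c :=
      Finset.card_pos.2 ⟨a₀, Finset.mem_inter.2 ⟨mem_NF.2 hua₀, mem_Af.2 ha₀A⟩⟩
    have hHsub : HitF G u ⊆ TriF G := Finset.filter_subset _ _
    have hhit : (HitF G u).card = c := hit_card hsat huA
    have hck : c ≤ k := by rw [← hhit, ← hkTri]; exact Finset.card_le_card hHsub
    have hmiss : (MissF G u).card = k - c := by
      rw [MissF, Finset.card_sdiff_of_subset hHsub, hkTri, hhit]
    have hsplit : c + ((NF G u) \ (Af G)).card = d := by
      rw [hc, hd]
      exact Finset.card_inter_add_card_sdiff _ _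
    have hdb := deg_bound hsat huA hcpos
    rw [hmiss] at hdb
    have hupper := upper_count hsat huA
    have hch := two_choose d
    rw [← hd, ← hc] at hupper
    -- arithmetic
    have hct : c + t = k := by omega
    have hdkt : d ≤ k + 5 * t := by omega
    have h2n : 2 * Fintype.card V ≤ 2 + d + d * d + 4 * c := by
      have := Nat.mul_le_mul_left 2 hupper
      omega
    have hDD : d * d ≤ (k + 5 * t) * (k + 5 * t) := Nat.mul_le_mul hdkt hdkt
    nlinarith [hDD, h2n, hdkt, hct, sq_nonneg (k + 5 * t)]
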